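/- For complex s with Re(s) > 1, ∑_{n=1}^∞ d(n)²/n^s = ζ(s)⁴/ζ(2s). -/

import Mathlib

open ArithmeticFunction LSeries Complex Finset
open scoped LSeries.notation
open scoped ArithmeticFunction.Moebius ArithmeticFunction.zeta ArithmeticFunction.sigma

namespace DivisorSquared

/-- `h n = μ (√n)` if `n` is a square, `0` otherwise. Its L-series is `1/ζ(2s)`. -/
noncomputable def h : ArithmeticFunction ℂ where
  toFun n := if IsSquare n then ((μ n.sqrt : ℤ) : ℂ) else 0
  map_zero' := by simp

lemma h_apply (n : ℕ) : h n = if IsSquare n then ((μ n.sqrt : ℤ) : ℂ) else 0 := rfl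

lemma h_sq (m : ℕ) : h (m ^ 2) = ((μ m : ℤ) : ℂ) := by
  rw [h_apply, if_pos ⟨m, by ring⟩]
  congr 1
  rw [Nat.sqrt_eq']

lemma h_mult : h.IsMultiplicative := by
  constructor
  · have : (1 : ℕ) = 1 ^ 2 := by norm_num
    rw [this, h_sq]
    simp
  · intro m n hmn
    by_cases H : IsSquare (m * n)
    · obtain ⟨c, hc⟩ := H
      obtain ⟨a, ha⟩ : ∃ a, m = a ^ 2 :=
        exists_eq_pow_of_mul_eq_pow (k := 2) (c := c)
          (by rwa [Nat.isUnit_iff]) (by rw [hc]; ring)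
      obtain ⟨b, hb⟩ : ∃ b, n = b ^ 2 :=
        exists_eq_pow_of_mul_eq_pow (k := 2) (c := c)
          (by rw [Nat.isUnit_iff]; exact Nat.coprime_comm.mp hmn)
          (by rw [mul_comm, hc]; ring)
      subst ha hb
      have hab : Nat.Coprime a b :=
        Nat.Coprime.coprime_dvd_left (dvd_pow_self a two_ne_zero)
          (Nat.Coprime.coprime_dvd_right (dvd_pow_self b two_ne_zero) hmn)
      rw [← mul_pow, h_sq, h_sq, h_sq, isMultiplicative_moebius.map_mul_of_coprime hab]
      push_cast
      ring
    · rw [h_apply, if_neg H]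
      by_cases Hm : IsSquare m
      · by_cases Hn : IsSquare n
        · exact absurd (Hm.mul Hn) H
        · rw [h_apply n, if_neg Hn, mul_zero]
      · rw [h_apply m, if_neg Hm, zero_mul]

lemma not_isSquare_pow_odd {p : ℕ} (hp : p.Prime) {j : ℕ} (hj : Odd j) :
    ¬ IsSquare (p ^ j) := by
  rintro ⟨c, hc⟩
  have hcd : c ∣ p ^ j := ⟨c, hc⟩
  obtain ⟨i, hi, rfl⟩ := (Nat.dvd_prime_pow hp).mp hcd
  rw [← pow_add] at hc
  have := Nat.pow_right_injective hp.two_le hc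
  obtain ⟨k, hk⟩ := hj
  omega

lemma h_pp {p : ℕ} (hp : p.Prime) (j : ℕ) :
    h (p ^ j) = (if j = 2 then (-1 : ℂ) else 0) + (if j = 0 then 1 else 0) := by
  rcases Nat.even_or_odd j with he | ho
  · obtain ⟨m, rfl⟩ := he
    have hpm : p ^ (m + m) = (p ^ m) ^ 2 := by ring
    rw [hpm, h_sq]
    match m with
    | 0 => simp
    | 1 => rw [pow_one, moebius_apply_prime hp]; norm_num
    | (k + 2) =>
      rw [moebius_apply_prime_pow hp (by omega)]
      have h1 : ¬ (k + 2 = 1) := by omega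
      have h2 : ¬ (k + 2 + (k + 2) = 2) := by omega
      have h3 : ¬ (k + 2 + (k + 2) = 0) := by omega
      simp [h1, h2, h3]
  · rw [h_apply, if_neg (not_isSquare_pow_odd hp ho)]
    obtain ⟨k, hk⟩ := ho
    have h2 : ¬ (j = 2) := by omega
    have h0 : ¬ (j = 0) := by omega
    simp [h2, h0]

/-- The coercion of ζ to ℂ. -/
noncomputable def zc : ArithmeticFunction ℂ := ((ζ : ArithmeticFunction ℕ) : ArithmeticFunction ℂ)

noncomputable def d2 : ArithmeticFunction ℂ := zc * zc

noncomputable def d4 : ArithmeticFunction ℂ := d2 * d2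

noncomputable def dsq : ArithmeticFunction ℂ :=
  (((σ 0 : ArithmeticFunction ℕ) : ArithmeticFunction ℂ)).pmul
    (((σ 0 : ArithmeticFunction ℕ) : ArithmeticFunction ℂ))

lemma zc_mult : zc.IsMultiplicative := isMultiplicative_zeta.natCast

lemma d2_mult : d2.IsMultiplicative := zc_mult.mul zc_mult

lemma d4_mult : d4.IsMultiplicative := d2_mult.mul d2_mult

lemma dsq_mult : dsq.IsMultiplicative :=
  (isMultiplicative_sigma.natCast).pmul (isMultiplicative_sigma.natCast)

lemma mul_apply_pp {p : ℕ} (hp : p.Prime) (k : ℕ) (f g : ArithmeticFunction ℂ) :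
    (f * g) (p ^ k) = ∑ j ∈ range (k + 1), f (p ^ (k - j)) * g (p ^ j) := by
  rw [mul_apply, Nat.sum_divisorsAntidiagonal' (f := fun a b => f a * g b),
    Nat.sum_divisors_prime_pow hp]
  refine Finset.sum_congr rfl fun j hj => ?_
  rw [mem_range] at hj
  rw [Nat.pow_div (by omega) hp.pos]

lemma zc_pp {p : ℕ} (hp : p.Prime) (i : ℕ) : zc (p ^ i) = 1 := by
  have : p ^ i ≠ 0 := pow_ne_zero _ hp.pos.ne'
  simp [zc, zeta_apply_ne this]

lemma d2_pp {p : ℕ} (hp : p.Prime) (i : ℕ) : d2 (p ^ i) = ((i + 1 : ℕ) : ℂ) := by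
  rw [d2, mul_apply_pp hp]
  rw [Finset.sum_congr rfl fun j hj => by rw [zc_pp hp, zc_pp hp, one_mul]]
  simp

/-- The divisor-count of `p^k` as a fourfold convolution value. -/
def N (i : ℕ) : ℕ := ∑ j ∈ range (i + 1), (i - j + 1) * (j + 1)

lemma d4_pp {p : ℕ} (hp : p.Prime) (k : ℕ) : d4 (p ^ k) = ((N k : ℕ) : ℂ) := by
  rw [d4, mul_apply_pp hp]
  rw [Finset.sum_congr rfl fun j hj => by rw [d2_pp hp, d2_pp hp]]
  rw [N]
  push_cast
  rfl

lemma N_step (m : ℕ) : N (m + 2) = (m + 3) ^ 2 + N m := by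
  have gauss : ∑ j ∈ range (m + 1), (j + 1) * 2 = (m + 1) * (m + 2) := by
    induction m with
    | zero => rfl
    | succ n ih => rw [Finset.sum_range_succ, ih]; ring
  unfold N
  rw [Finset.sum_range_succ, Finset.sum_range_succ]
  have hc : ∀ j ∈ range (m + 1),
      (m + 2 - j + 1) * (j + 1) = (m - j + 1) * (j + 1) + (j + 1) * 2 := by
    intro j hj
    rw [mem_range] at hj
    have : m + 2 - j = (m - j) + 2 := by omega
    rw [this]
    ring
  rw [Finset.sum_congr rfl hc, Finset.sum_add_distrib, gauss]
  have h1 : m + 2 - (m + 1) + 1 = 2 := by omega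
  have h2 : m + 2 - (m + 1 + 1) + 1 = 1 := by omega
  rw [h1, h2]
  ring

lemma key : dsq = d4 * h := by
  refine (IsMultiplicative.eq_iff_eq_on_prime_powers dsq dsq_mult (d4 * h)
    (d4_mult.mul h_mult)).mpr fun p k hp => ?_
  have hL : dsq (p ^ k) = (((k + 1) * (k + 1) : ℕ) : ℂ) := by
    rw [dsq, pmul_apply, natCoe_apply, sigma_zero_apply_prime_pow hp]
    push_cast
    ring
  rw [hL, mul_apply_pp hp]
  have hterm : ∀ j ∈ range (k + 1),
      d4 (p ^ (k - j)) * h (p ^ j) =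
        (if j = 2 then -(((N (k - j) : ℕ) : ℂ)) else 0) +
          (if j = 0 then ((N (k - j) : ℕ) : ℂ) else 0) := by
    intro j hj
    rw [d4_pp hp, h_pp hp]
    by_cases h2 : j = 2 <;> by_cases h0 : j = 0 <;> simp [h2, h0]
  rw [Finset.sum_congr rfl hterm, Finset.sum_add_distrib, Finset.sum_ite_eq' (range (k + 1)),
    Finset.sum_ite_eq' (range (k + 1))]
  simp only [mem_range]
  by_cases hk2 : 2 < k + 1
  · rw [if_pos hk2, if_pos (by omega)]
    obtain ⟨m, rfl⟩ : ∃ m, k = m + 2 := ⟨k - 2, by omega⟩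
    have e1 : m + 2 - 2 = m := by omega
    have e2 : m + 2 - 0 = m + 2 := by omega
    rw [e1, e2, N_step]
    push_cast
    ring
  · have hk1 : k ≤ 1 := by omega
    interval_cases k <;> norm_num [N, Finset.sum_range_succ]

lemma zc_summable {s : ℂ} (hs : 1 < s.re) : LSeriesSummable (⇑zc) s :=
  LSeriesSummable_zeta_iff.mpr hs

lemma L_zc {s : ℂ} (hs : 1 < s.re) : LSeries (⇑zc) s = riemannZeta s :=
  LSeries_zeta_eq_riemannZeta hs

lemma d4_summable {s : ℂ} (hs : 1 < s.re) : LSeriesSummable (⇑d4) s :=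
  LSeriesSummable_mul (LSeriesSummable_mul (zc_summable hs) (zc_summable hs))
    (LSeriesSummable_mul (zc_summable hs) (zc_summable hs))

lemma L_d4 {s : ℂ} (hs : 1 < s.re) : LSeries (⇑d4) s = riemannZeta s ^ 4 := by
  rw [d4, d2, LSeries_mul' (LSeriesSummable_mul (zc_summable hs) (zc_summable hs))
      (LSeriesSummable_mul (zc_summable hs) (zc_summable hs)),
    LSeries_mul' (zc_summable hs) (zc_summable hs), L_zc hs]
  ring

lemma h_summable {s : ℂ} (hs : 1 < s.re) : LSeriesSummable (⇑h) s := by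
  refine LSeriesSummable_of_bounded_of_one_lt_re (m := 1) (fun n _ => ?_) hs
  rw [h_apply]
  split
  · rw [Complex.norm_intCast]
    exact_mod_cast abs_moebius_le_one
  · simp

lemma two_s_re {s : ℂ} (hs : 1 < s.re) : 1 < (2 * s).re := by
  have : (2 * s).re = 2 * s.re := by simp [Complex.mul_re]
  rw [this]; linarith

lemma term_h_sq {s : ℂ} (m : ℕ) : term (⇑h) s (m ^ 2) = term ↗μ (2 * s) m := by
  rcases eq_or_ne m 0 with rfl | hm
  · simp [LSeries.term]
  · rw [term_of_ne_zero (pow_ne_zero 2 hm), term_of_ne_zero hm, h_sq]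
    congr 1
    have hm0 : (m : ℂ) ≠ 0 := Nat.cast_ne_zero.mpr hm
    rw [two_mul, cpow_add _ _ hm0]
    have hcast : ((m : ℝ) : ℂ) = (m : ℂ) := by push_cast; rfl
    rw [← hcast, ← Complex.mul_cpow_ofReal_nonneg (Nat.cast_nonneg m) (Nat.cast_nonneg m)]
    norm_cast
    rw [sq]

lemma L_h {s : ℂ} (hs : 1 < s.re) : LSeries (⇑h) s = 1 / riemannZeta (2 * s) := by
  have h2s := two_s_re hs
  have key : LSeries (⇑h) s = LSeries ↗μ (2 * s) := by
    rw [LSeries, LSeries,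
      ← Function.Injective.tsum_eq (g := fun m : ℕ => m ^ 2)
        (Nat.pow_left_injective two_ne_zero) ?_]
    · exact tsum_congr term_h_sq
    · intro n hn
      rcases eq_or_ne n 0 with rfl | h0
      · simp [Function.mem_support, LSeries.term] at hn
      · have hterm : term (⇑h) s n ≠ 0 := hn
        have hne : h n ≠ 0 := fun hz =>
          hterm (by rw [term_of_ne_zero h0, hz, zero_div])
        have hsq : IsSquare n := by
          by_contra hns
          exact hne (by rw [h_apply, if_neg hns])
        obtain ⟨c, hc⟩ := hsq
        exact ⟨c, by rw [hc]; ring⟩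
  rw [key, ← LSeries_zeta_eq_riemannZeta h2s]
  have hmul := LSeries_zeta_mul_Lseries_moebius h2s
  rw [mul_comm] at hmul
  exact eq_one_div_of_mul_eq_one_left hmul

end DivisorSquared

open DivisorSquared in
theorem dirichlet_series_divisor_squared (s : ℂ) (hs : 1 < s.re) :
    ∑' n : ℕ+, ((Nat.divisors (n : ℕ)).card : ℂ) ^ 2 / (n : ℂ) ^ s =
      riemannZeta s ^ 4 / riemannZeta (2 * s) := by
  have h1 : ∑' n : ℕ+, ((Nat.divisors (n : ℕ)).card : ℂ) ^ 2 / (n : ℂ) ^ s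
      = LSeries (⇑dsq) s := by
    rw [LSeries, ← Function.Injective.tsum_eq (g := ((↑) : ℕ+ → ℕ)) PNat.coe_injective ?_]
    · refine tsum_congr fun n => ?_
      rw [term_of_ne_zero n.pos.ne' (⇑dsq) s, dsq, pmul_apply, natCoe_apply,
        sigma_zero_apply, sq]
    · intro n hn
      rcases eq_or_ne n 0 with rfl | h0
      · simp [Function.mem_support, LSeries.term] at hn
      · exact ⟨⟨n, Nat.pos_of_ne_zero h0⟩, rfl⟩
  rw [h1, key]
  have : LSeries (⇑(d4 * h)) s = LSeries (⇑d4) s * LSeries (⇑h) s :=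
    LSeries_mul' (d4_summable hs) (h_summable hs)
  rw [this, L_d4 hs, L_h hs, mul_one_div]
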